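/- Assume k := 2 f''(1) + 6 f'(1) ≠ 0. Let 0 < c₀ < c_s and let ξ : (c₀, c_s) → (0,1) satisfy N_c(ξ(c)) = 0 for every c ∈ (c₀, c_s) and ξ(c) → 0 as c → c_s⁻. Then ∂_x N_c(ξ(c))/ν_c⁴ → −3/k and ∂_x² N_c(ξ(c))/ν_c² → 4 as c → c_s⁻, where ∂_x N_c(x) = 2c²x + 4F(1−x) − 4(1−x) f(1−x) and ∂_x² N_c(x) = 2c² + 8 f(1−x) + 4(1−x) f'(1−x) denote the first and second derivatives of N_c in the variable x. -/

import Mathlib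

open Real MeasureTheory Filter Topology

set_option maxHeartbeats 1000000

/-- Asymptotics of the derivatives of `N_c` at its first zero:
`∂ₓN_c(ξ(c))/ν_c⁴ → -3/k` and `∂ₓ²N_c(ξ(c))/ν_c² → 4` as `c → c_s⁻`. -/
theorem stmt_14 (f : ℝ → ℝ) (U : Set ℝ) (hU : IsOpen U) (hUIcc : Set.Icc (0:ℝ) 1 ⊆ U)
    (hf : ContDiffOn ℝ 3 f U) (hf1 : f 1 = 0) (hf'1 : deriv f 1 < 0)
    (cs k : ℝ) (hcs : cs = Real.sqrt (-(2 * deriv f 1)))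
    (hk : k = 2 * deriv (deriv f) 1 + 6 * deriv f 1) (hk0 : k ≠ 0)
    (F : ℝ → ℝ) (hF : ∀ r, F r = ∫ ρ in r..1, f ρ)
    (c₀ : ℝ) (hc₀ : 0 < c₀) (hc₀cs : c₀ < cs)
    (ξ : ℝ → ℝ)
    (hξmem : ∀ c ∈ Set.Ioo c₀ cs, ξ c ∈ Set.Ioo (0:ℝ) 1)
    (hzero : ∀ c ∈ Set.Ioo c₀ cs,
      c ^ 2 * (ξ c) ^ 2 - 4 * (1 - ξ c) * F (1 - ξ c) = 0)
    (hξ0 : Tendsto ξ (𝓝[<] cs) (𝓝 0)) :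
    Tendsto (fun c => (2 * c ^ 2 * ξ c + 4 * F (1 - ξ c) - 4 * (1 - ξ c) * f (1 - ξ c))
        / (Real.sqrt (cs ^ 2 - c ^ 2)) ^ 4) (𝓝[<] cs) (𝓝 (-3 / k)) ∧
      Tendsto (fun c => (2 * c ^ 2 + 8 * f (1 - ξ c) + 4 * (1 - ξ c) * deriv f (1 - ξ c))
        / (Real.sqrt (cs ^ 2 - c ^ 2)) ^ 2) (𝓝[<] cs) (𝓝 4) := by
  set a := deriv f 1 with ha_def
  set b := deriv (deriv f) 1 with hb_def
  have ha : a < 0 := hf'1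
  have h1mem : (1:ℝ) ∈ U := hUIcc (by norm_num)
  have h1U : U ∈ 𝓝 (1:ℝ) := hU.mem_nhds h1mem
  have hcs2 : cs ^ 2 = -(2*a) := by
    rw [hcs]; exact Real.sq_sqrt (by linarith)
  -- smoothness consequences
  have hfd : DifferentiableOn ℝ f U := hf.differentiableOn (by norm_num)
  have hfc : ContinuousOn f U := hf.continuousOn
  have h3 : ContDiffOn ℝ (2+1) f U := by exact_mod_cast hf
  obtain ⟨-, -, hf'2⟩ := (contDiffOn_succ_iff_deriv_of_isOpen hU).mp h3
  have h2 : ContDiffOn ℝ (1+1) (deriv f) U := by exact_mod_cast hf'2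
  obtain ⟨hf'd, -, -⟩ := (contDiffOn_succ_iff_deriv_of_isOpen hU).mp h2
  have hderivb : HasDerivAt (deriv f) b 1 := (hf'd.differentiableAt h1U).hasDerivAt
  -- F facts
  have hF1 : F 1 = 0 := by rw [hF]; simp
  have hFd : ∀ r ∈ Set.Ioc (0:ℝ) 1, HasDerivAt F (-(f r)) r := by
    intro r hr
    have hsub : Set.uIcc r 1 ⊆ U := by
      rw [Set.uIcc_of_le hr.2]
      exact fun y hy => hUIcc ⟨le_trans hr.1.le hy.1, hy.2⟩
    have hint : IntervalIntegrable f volume r 1 := (hfc.mono hsub).intervalIntegrable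
    have hmeas : StronglyMeasurableAtFilter f (𝓝 r) volume :=
      ⟨U, hU.mem_nhds (hUIcc ⟨hr.1.le, hr.2⟩), hfc.aestronglyMeasurable hU.measurableSet⟩
    have hca : ContinuousAt f r := hfc.continuousAt (hU.mem_nhds (hUIcc ⟨hr.1.le, hr.2⟩))
    have h := intervalIntegral.integral_hasDerivAt_left hint hmeas hca
    have hFeq : F = fun u => ∫ x in u..1, f x := funext hF
    rw [hFeq]; exact h
  -- basic filter facts at 0⁺
  have hmem01 : ∀ᶠ x : ℝ in 𝓝[>] (0:ℝ), x ∈ Set.Ioo (0:ℝ) 1 :=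
    Ioo_mem_nhdsGT (by norm_num)
  have hone : Tendsto (fun x:ℝ => 1 - x) (𝓝[>] (0:ℝ)) (𝓝 1) := by
    have h : Continuous fun x:ℝ => 1 - x := by fun_prop
    simpa using (h.tendsto 0).mono_left nhdsWithin_le_nhds
  have hfct1 : ContinuousAt f 1 := hfc.continuousAt h1U
  have hf10 : Tendsto (fun x:ℝ => f (1 - x)) (𝓝[>] (0:ℝ)) (𝓝 0) := by
    have := hfct1.tendsto.comp hone
    simpa [hf1, Function.comp_def] using this
  have hFct1 : ContinuousAt F 1 := (hFd 1 ⟨one_pos, le_refl 1⟩).continuousAt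
  have hF10 : Tendsto (fun x:ℝ => F (1 - x)) (𝓝[>] (0:ℝ)) (𝓝 0) := by
    have := hFct1.tendsto.comp hone
    simpa [hF1, Function.comp_def] using this
  have hxt : Tendsto (fun x:ℝ => x) (𝓝[>] (0:ℝ)) (𝓝 0) :=
    tendsto_id.mono_left nhdsWithin_le_nhds
  -- Taylor step 1 : first-order expansion of deriv f
  have h3t : Tendsto (fun x => (deriv f (1-x) - a + b*x)/x) (𝓝[>] (0:ℝ)) (𝓝 0) := by
    have hslope := hasDerivAt_iff_tendsto_slope.mp hderivb
    have hmap : Tendsto (fun x : ℝ => 1 - x) (𝓝[>] (0:ℝ)) (𝓝[≠] (1:ℝ)) := by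
      rw [tendsto_nhdsWithin_iff]
      refine ⟨hone, ?_⟩
      filter_upwards [self_mem_nhdsWithin] with x hx
      have : (0:ℝ) < x := hx
      simp only [Set.mem_compl_iff, Set.mem_singleton_iff]
      intro h; linarith [sub_eq_self.mp h]
    have hcomp : Tendsto (fun x => slope (deriv f) 1 (1-x)) (𝓝[>] (0:ℝ)) (𝓝 b) :=
      hslope.comp hmap
    have hsub : Tendsto (fun x => b - slope (deriv f) 1 (1-x)) (𝓝[>] (0:ℝ)) (𝓝 (b - b)) :=
      tendsto_const_nhds.sub hcomp
    rw [sub_self] at hsub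
    refine hsub.congr' ?_
    filter_upwards [self_mem_nhdsWithin] with x hx
    have hx0 : x ≠ 0 := ne_of_gt hx
    rw [slope_def_field, ← ha_def]
    rw [show (1:ℝ) - x - 1 = -x by ring]
    field_simp [hx0]
    ring
  -- Taylor step 2 : second-order expansion of f
  have h2t : Tendsto (fun x => (f (1-x) + a*x - b/2*x^2)/x^2) (𝓝[>] (0:ℝ)) (𝓝 0) := by
    apply HasDerivAt.lhopital_zero_nhdsGT
      (f' := fun x => -(deriv f (1-x)) + a - b*x) (g' := fun x => 2*x)
    · filter_upwards [hmem01] with x hx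
      have hmemU : (1-x) ∈ U := hUIcc ⟨by linarith [hx.2], by linarith [hx.1]⟩
      have hdf : HasDerivAt f (deriv f (1-x)) (1-x) :=
        (hfd.differentiableAt (hU.mem_nhds hmemU)).hasDerivAt
      have hcomp : HasDerivAt (fun y => f (1 - y)) (deriv f (1-x) * (-1)) x :=
        hdf.comp x ((hasDerivAt_id x).const_sub 1)
      have hlin : HasDerivAt (fun y:ℝ => a*y) a x := by
        simpa using (hasDerivAt_id x).const_mul a
      have hq : HasDerivAt (fun y:ℝ => b/2*y^2) (b/2*(2*x^1)) x := by
        have := (hasDerivAt_pow 2 x).const_mul (b/2)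
        simpa using this
      have h := (hcomp.add hlin).sub hq
      refine HasDerivAt.congr_deriv h ?_
      ring
    · filter_upwards [hmem01] with x hx
      simpa using hasDerivAt_pow 2 x
    · filter_upwards [self_mem_nhdsWithin] with x hx
      have : (0:ℝ) < x := hx
      positivity
    · have hpoly : Tendsto (fun x:ℝ => a*x - b/2*x^2) (𝓝[>] (0:ℝ)) (𝓝 0) := by
        have h : Continuous fun x:ℝ => a*x - b/2*x^2 := by fun_prop
        simpa using (h.tendsto 0).mono_left nhdsWithin_le_nhds
      have h := hf10.add hpoly
      simp only [add_zero] at h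
      exact h.congr fun x => by ring
    · have h := (continuous_pow 2).tendsto (0:ℝ)
      simpa using h.mono_left nhdsWithin_le_nhds
    · have h := h3t.const_mul (-(1/2):ℝ)
      rw [mul_zero] at h
      refine h.congr' ?_
      filter_upwards [self_mem_nhdsWithin] with x hx
      have hx' : (0:ℝ) < x := hx
      have hx0 : x ≠ 0 := ne_of_gt hx'
      rw [← mul_div_assoc, div_eq_div_iff hx0 (mul_ne_zero two_ne_zero hx0)]
      ring
  -- Taylor step 3 : third-order expansion of F∘(1-·)
  have hGt : Tendsto (fun x => (F (1-x) + a/2*x^2 - b/6*x^3)/x^3) (𝓝[>] (0:ℝ)) (𝓝 0) := by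
    apply HasDerivAt.lhopital_zero_nhdsGT
      (f' := fun x => f (1-x) + a*x - b/2*x^2) (g' := fun x => 3*x^2)
    · filter_upwards [hmem01] with x hx
      have hdF : HasDerivAt F (-(f (1-x))) (1-x) :=
        hFd (1-x) ⟨by linarith [hx.2], by linarith [hx.1]⟩
      have hcomp : HasDerivAt (fun y => F (1 - y)) (-(f (1-x)) * (-1)) x :=
        hdF.comp x ((hasDerivAt_id x).const_sub 1)
      have hq : HasDerivAt (fun y:ℝ => a/2*y^2) (a/2*(2*x^1)) x := by
        have := (hasDerivAt_pow 2 x).const_mul (a/2)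
        simpa using this
      have hc : HasDerivAt (fun y:ℝ => b/6*y^3) (b/6*(3*x^2)) x := by
        have := (hasDerivAt_pow 3 x).const_mul (b/6)
        simpa using this
      have h := (hcomp.add hq).sub hc
      refine HasDerivAt.congr_deriv h ?_
      ring
    · filter_upwards [hmem01] with x hx
      simpa using hasDerivAt_pow 3 x
    · filter_upwards [self_mem_nhdsWithin] with x hx
      have : (0:ℝ) < x := hx
      positivity
    · have hpoly : Tendsto (fun x:ℝ => a/2*x^2 - b/6*x^3) (𝓝[>] (0:ℝ)) (𝓝 0) := by
        have h : Continuous fun x:ℝ => a/2*x^2 - b/6*x^3 := by fun_prop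
        simpa using (h.tendsto 0).mono_left nhdsWithin_le_nhds
      have h := hF10.add hpoly
      simp only [add_zero] at h
      exact h.congr fun x => by ring
    · have h := (continuous_pow 3).tendsto (0:ℝ)
      simpa using h.mono_left nhdsWithin_le_nhds
    · have h := h2t.const_mul ((1:ℝ)/3)
      rw [mul_zero] at h
      refine h.congr' ?_
      filter_upwards [self_mem_nhdsWithin] with x hx
      have hx' : (0:ℝ) < x := hx
      have hx0 : x ≠ 0 := ne_of_gt hx'
      rw [← mul_div_assoc, div_eq_div_iff (pow_ne_zero 2 hx0)
        (mul_ne_zero three_ne_zero (pow_ne_zero 2 hx0))]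
      ring
  -- main limits in the variable x
  have hAA : Tendsto (fun x => (cs^2*x^2 - 4*(1-x)*F (1-x))/x^3) (𝓝[>] (0:ℝ))
      (𝓝 (-k/3)) := by
    have hrhs : Tendsto (fun x => -(2*b/3+2*a) + (2*b/3)*x
        + (4*x-4)*((F (1-x) + a/2*x^2 - b/6*x^3)/x^3)) (𝓝[>] (0:ℝ))
        (𝓝 (-(2*b/3+2*a) + (2*b/3)*0 + (4*0-4)*0)) := by
      exact (tendsto_const_nhds.add (tendsto_const_nhds.mul hxt)).add
        (((hxt.const_mul 4).sub tendsto_const_nhds).mul hGt)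
    have hval : -(2*b/3+2*a) + (2*b/3)*0 + (4*0-4)*0 = -k/3 := by rw [hk]; ring
    rw [hval] at hrhs
    refine hrhs.congr' ?_
    filter_upwards [self_mem_nhdsWithin] with x hx
    have hx0 : x ≠ 0 := ne_of_gt hx
    rw [hcs2]
    field_simp [hx0]
    ring
  have hAP : Tendsto (fun x => (2*cs^2*x + 4*F (1-x) - 4*(1-x)*f (1-x))/x^2) (𝓝[>] (0:ℝ))
      (𝓝 (-k)) := by
    have hrhs : Tendsto (fun x => (-6*a-2*b) + (8*b/3)*x
        + (4*x)*((F (1-x) + a/2*x^2 - b/6*x^3)/x^3)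
        + (4*x-4)*((f (1-x) + a*x - b/2*x^2)/x^2)) (𝓝[>] (0:ℝ))
        (𝓝 ((-6*a-2*b) + (8*b/3)*0 + (4*0)*0 + (4*0-4)*0)) := by
      exact ((tendsto_const_nhds.add (tendsto_const_nhds.mul hxt)).add
        ((hxt.const_mul 4).mul hGt)).add
        (((hxt.const_mul 4).sub tendsto_const_nhds).mul h2t)
    have hval : (-6*a-2*b) + (8*b/3)*0 + (4*0)*0 + (4*0-4)*0 = -k := by rw [hk]; ring
    rw [hval] at hrhs
    refine hrhs.congr' ?_
    filter_upwards [self_mem_nhdsWithin] with x hx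
    have hx0 : x ≠ 0 := ne_of_gt hx
    rw [hcs2]
    field_simp [hx0]
    ring
  have hAQ : Tendsto (fun x => (2*cs^2 + 8*f (1-x) + 4*(1-x)*deriv f (1-x))/x) (𝓝[>] (0:ℝ))
      (𝓝 (-2*k)) := by
    have hrhs : Tendsto (fun x => (-12*a-4*b) + (8*b)*x
        + (8*x)*((f (1-x) + a*x - b/2*x^2)/x^2)
        + (4-4*x)*((deriv f (1-x) - a + b*x)/x)) (𝓝[>] (0:ℝ))
        (𝓝 ((-12*a-4*b) + (8*b)*0 + (8*0)*0 + (4-4*0)*0)) := by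
      exact ((tendsto_const_nhds.add (tendsto_const_nhds.mul hxt)).add
        ((hxt.const_mul 8).mul h2t)).add
        ((tendsto_const_nhds.sub (hxt.const_mul 4)).mul h3t)
    have hval : (-12*a-4*b) + (8*b)*0 + (8*0)*0 + (4-4*0)*0 = -2*k := by rw [hk]; ring
    rw [hval] at hrhs
    refine hrhs.congr' ?_
    filter_upwards [self_mem_nhdsWithin] with x hx
    have hx0 : x ≠ 0 := ne_of_gt hx
    rw [hcs2]
    field_simp [hx0]
    ring
  -- transfer along ξ
  have hev : ∀ᶠ c in 𝓝[<] cs, c ∈ Set.Ioo c₀ cs :=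
    Ioo_mem_nhdsLT hc₀cs
  have hξpos : Tendsto ξ (𝓝[<] cs) (𝓝[>] (0:ℝ)) := by
    rw [tendsto_nhdsWithin_iff]
    exact ⟨hξ0, hev.mono fun c hc => (hξmem c hc).1⟩
  have hevnu : ∀ᶠ c in 𝓝[<] cs, 0 < cs^2 - c^2 := by
    filter_upwards [hev] with c hc
    have h1 : c₀ < c := hc.1
    have h2 : c < cs := hc.2
    nlinarith
  have hA : Tendsto (fun c => (cs^2*(ξ c)^2 - 4*(1-ξ c)*F (1-ξ c))/(ξ c)^3) (𝓝[<] cs)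
      (𝓝 (-k/3)) := hAA.comp hξpos
  have hP : Tendsto (fun c => (2*cs^2*(ξ c) + 4*F (1-ξ c) - 4*(1-ξ c)*f (1-ξ c))/(ξ c)^2)
      (𝓝[<] cs) (𝓝 (-k)) := hAP.comp hξpos
  have hQ : Tendsto (fun c => (2*cs^2 + 8*f (1-ξ c) + 4*(1-ξ c)*deriv f (1-ξ c))/(ξ c))
      (𝓝[<] cs) (𝓝 (-2*k)) := hAQ.comp hξpos
  have hk3 : (-k/3 : ℝ) ≠ 0 := by
    simp only [ne_eq, div_eq_zero_iff, neg_eq_zero]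
    push_neg
    exact ⟨hk0, by norm_num⟩
  have hT : Tendsto (fun c => ξ c / (cs^2 - c^2)) (𝓝[<] cs) (𝓝 (-3/k)) := by
    have hinv := hA.inv₀ hk3
    have hval : (-k/3 : ℝ)⁻¹ = -3/k := by
      rw [inv_div, div_neg, neg_div]
    rw [hval] at hinv
    refine hinv.congr' ?_
    filter_upwards [hev, hevnu] with c hc hnu
    have hx := hξmem c hc
    have hx0 : ξ c ≠ 0 := ne_of_gt hx.1
    have hz := hzero c hc
    have hnum : cs^2*(ξ c)^2 - 4*(1-ξ c)*F (1-ξ c) = (cs^2 - c^2)*(ξ c)^2 := by linarith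
    rw [hnum]
    field_simp [hx0]
  constructor
  · -- first limit
    have hlim : Tendsto (fun c => (-2)*(ξ c/(cs^2-c^2))
        + ((2*cs^2*(ξ c) + 4*F (1-ξ c) - 4*(1-ξ c)*f (1-ξ c))/(ξ c)^2)
          * ((ξ c/(cs^2-c^2)) * (ξ c/(cs^2-c^2)))) (𝓝[<] cs)
        (𝓝 ((-2)*(-3/k) + (-k)*((-3/k)*(-3/k)))) :=
      (hT.const_mul (-2)).add (hP.mul (hT.mul hT))
    have hval : (-2)*(-3/k) + (-k)*((-3/k)*(-3/k)) = -3/k := by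
      field_simp
      ring
    rw [hval] at hlim
    refine hlim.congr' ?_
    filter_upwards [hev, hevnu] with c hc hnu
    have hx := hξmem c hc
    have hx0 : ξ c ≠ 0 := ne_of_gt hx.1
    have hnu0 : cs^2 - c^2 ≠ 0 := ne_of_gt hnu
    have hs4 : Real.sqrt (cs^2-c^2)^4 = (cs^2-c^2)^2 := by
      rw [show (4:ℕ) = 2*2 from rfl, pow_mul, Real.sq_sqrt hnu.le]
    rw [hs4]
    field_simp [hx0]
    ring
  · -- second limit
    have hlim : Tendsto (fun c => (-2:ℝ)
        + ((2*cs^2 + 8*f (1-ξ c) + 4*(1-ξ c)*deriv f (1-ξ c))/(ξ c))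
          * (ξ c/(cs^2-c^2))) (𝓝[<] cs)
        (𝓝 ((-2) + (-2*k)*(-3/k))) :=
      tendsto_const_nhds.add (hQ.mul hT)
    have hval : (-2:ℝ) + (-2*k)*(-3/k) = 4 := by
      field_simp
      ring
    rw [hval] at hlim
    refine hlim.congr' ?_
    filter_upwards [hev, hevnu] with c hc hnu
    have hx := hξmem c hc
    have hx0 : ξ c ≠ 0 := ne_of_gt hx.1
    have hnu0 : cs^2 - c^2 ≠ 0 := ne_of_gt hnu
    have hs2 : Real.sqrt (cs^2-c^2)^2 = cs^2-c^2 := Real.sq_sqrt hnu.le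
    rw [hs2]
    field_simp [hx0]
    ring
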